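/- A strongly connected orientation D of a 2-edge-connected undirected graph G=(V,E) is decreasingly minimal among all strongly connected orientations of G if and only if there exist no two nodes s, t with ρ_D(t) ≥ ρ_D(s) + 2 such that D contains two arc-disjoint directed paths from s to t. -/

import Mathlib

open Finset

/-- Head of edge `e` under orientation `o` (an orientation picks, for each edge,
one of its two end-nodes as head). -/
def ohead {V E : Type*} (ends : E → V × V) (o : E → Bool) (e : E) : V :=
  if o e then (ends e).1 else (ends e).2

/-- Tail of edge `e` under orientation `o`. -/
def otail {V E : Type*} (ends : E → V × V) (o : E → Bool) (e : E) : V :=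
  if o e then (ends e).2 else (ends e).1

/-- In-degree of node `v` in the orientation `o` of the graph. -/
def indeg {V E : Type*} [Fintype E] [DecidableEq V] (ends : E → V × V) (o : E → Bool)
    (v : V) : ℕ :=
  (Finset.univ.filter fun e => ohead ends o e = v).card

/-- `e_G(X)`: number of edges with at least one end-node in `X`. -/
def eG {V E : Type*} [Fintype E] [DecidableEq V] (ends : E → V × V) (X : Finset V) : ℕ :=
  (Finset.univ.filter fun e => (ends e).1 ∈ X ∨ (ends e).2 ∈ X).card

/-- `i_G(X)`: number of edges induced by `X` (both end-nodes in `X`). -/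
def iG {V E : Type*} [Fintype E] [DecidableEq V] (ends : E → V × V) (X : Finset V) : ℕ :=
  (Finset.univ.filter fun e => (ends e).1 ∈ X ∧ (ends e).2 ∈ X).card

/-- `ρ_D(X)`: number of arcs entering `X` (head in `X`, tail outside). -/
def inCut {V E : Type*} [Fintype E] [DecidableEq V] (ends : E → V × V) (o : E → Bool)
    (X : Finset V) : ℕ :=
  (Finset.univ.filter fun e => ohead ends o e ∈ X ∧ otail ends o e ∉ X).card

/-- `d_G(X)`: number of edges with exactly one end-node in `X`. -/
def dG {V E : Type*} [Fintype E] [DecidableEq V] (ends : E → V × V) (X : Finset V) : ℕ :=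
  (Finset.univ.filter fun e =>
    ((ends e).1 ∈ X ∧ (ends e).2 ∉ X) ∨ ((ends e).2 ∈ X ∧ (ends e).1 ∉ X)).card

/-- `Reach ends o s t`: there is a directed path from `s` to `t` in the orientation `o`. -/
def Reach {V E : Type*} (ends : E → V × V) (o : E → Bool) : V → V → Prop :=
  Relation.ReflTransGen fun u v => ∃ e, otail ends o e = u ∧ ohead ends o e = v

/-- `IsDipath ends o s t P`: the list of edges `P` forms a directed walk from `s` to `t`. -/
def IsDipath {V E : Type*} (ends : E → V × V) (o : E → Bool) : V → V → List E → Prop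
  | s, t, [] => s = t
  | s, t, e :: P => otail ends o e = s ∧ IsDipath ends o (ohead ends o e) t P

/-- The components of `m` sorted in decreasing order. -/
def decSeq {V : Type*} [Fintype V] (m : V → ℕ) : List ℕ :=
  (Multiset.sort (Finset.univ.val.map m) (· ≤ ·)).reverse

/-- The components of `m` sorted in increasing order. -/
def incSeq {V : Type*} [Fintype V] (m : V → ℕ) : List ℕ :=
  Multiset.sort (Finset.univ.val.map m) (· ≤ ·)

open Finset

section GWalkSec
variable {V α : Type*}

/-- Generic walk in a digraph with arc set `α`, tail map `tl`, head map `hd`. -/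
def GWalk (tl hd : α → V) : V → V → List α → Prop
  | s, t, [] => s = t
  | s, t, a :: L => tl a = s ∧ GWalk tl hd (hd a) t L

variable {tl hd : α → V}

lemma gwalk_nil {s t : V} (h : s = t) : GWalk tl hd s t [] := h

lemma gwalk_append {s u t : V} {L₁ L₂ : List α} (h₁ : GWalk tl hd s u L₁)
    (h₂ : GWalk tl hd u t L₂) : GWalk tl hd s t (L₁ ++ L₂) := by
  induction L₁ generalizing s with
  | nil => cases h₁; simpa using h₂
  | cons a L ih => exact ⟨h₁.1, ih h₁.2⟩

lemma gwalk_trace_last {s t : V} {L : List α} (h : GWalk tl hd s t L) :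
    (s :: L.map hd).getLast (by simp) = t := by
  induction L generalizing s with
  | nil => exact h
  | cons a L ih =>
    have := ih h.2
    simpa [List.getLast_cons] using this

lemma gwalk_map_tl {s t : V} {L : List α} (h : GWalk tl hd s t L) :
    L.map tl = (s :: L.map hd).dropLast := by
  induction L generalizing s with
  | nil => simp
  | cons a L ih =>
    have h2 := ih h.2
    cases L with
    | nil => simp [h.1]
    | cons b M => simp_all [h.1]

/-- split a walk at a vertex occurring in its trace. -/
lemma gwalk_split {u t v : V} {L : List α} (h : GWalk tl hd u t L)
    (hv : v ∈ u :: L.map hd) :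
    ∃ L₂, GWalk tl hd v t L₂ ∧ (v :: L₂.map hd) <:+ (u :: L.map hd) ∧ L₂ <:+ L := by
  induction L generalizing u with
  | nil =>
    simp only [List.map_nil, List.mem_singleton] at hv
    exact ⟨[], by subst hv; exact h, by simp [hv], by simp⟩
  | cons a L ih =>
    rcases List.mem_cons.1 hv with rfl | hv'
    · exact ⟨a :: L, h, List.suffix_refl _, List.suffix_refl _⟩
    · obtain ⟨L₂, hw, hsfx, hsfx2⟩ := ih h.2 hv'
      exact ⟨L₂, hw, hsfx.trans (List.suffix_cons _ _),
        hsfx2.trans (List.suffix_cons _ _)⟩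

/-- Extraction of a vertex-simple walk from a walk. -/
lemma gwalk_simple {s t : V} {L : List α} (h : GWalk tl hd s t L) :
    ∃ L', GWalk tl hd s t L' ∧ (s :: L'.map hd).Nodup ∧ ∀ a ∈ L', a ∈ L := by
  induction L generalizing s with
  | nil => exact ⟨[], h, by simp, by simp⟩
  | cons a L ih =>
    obtain ⟨L', hw, hnd, hsub⟩ := ih h.2
    by_cases hs : s ∈ hd a :: L'.map hd
    · obtain ⟨L₂, hw2, hsfx, hsfx2⟩ := gwalk_split hw hs
      refine ⟨L₂, hw2, hsfx.sublist.nodup hnd, fun x hx => ?_⟩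
      exact List.mem_cons_of_mem _ (hsub x (hsfx2.sublist.mem hx))
    · refine ⟨a :: L', ⟨h.1, hw⟩, by simp only [List.map_cons]; exact List.nodup_cons.2 ⟨hs, hnd⟩, ?_⟩
      intro x hx
      rcases List.mem_cons.1 hx with rfl | hx'
      · exact List.mem_cons_self
      · exact List.mem_cons_of_mem _ (hsub x hx')

/-- edges of a vertex-simple walk are nodup (tails are distinct). -/
lemma gwalk_nodup_edges {s t : V} {L : List α} (h : GWalk tl hd s t L)
    (hnd : (s :: L.map hd).Nodup) : L.Nodup := by
  have h1 : (L.map tl).Nodup := by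
    rw [gwalk_map_tl h]
    exact hnd.sublist (List.dropLast_sublist _)
  exact h1.of_map _
end GWalkSec
set_option linter.unusedSectionVars false
section CountSec
variable {V E : Type*} [Fintype V] [Fintype E] [DecidableEq V]

/-- out-degree cut -/
def outCut (ends : E → V × V) (o : E → Bool) (X : Finset V) : ℕ :=
  (Finset.univ.filter fun e => otail ends o e ∈ X ∧ ohead ends o e ∉ X).card

variable (ends : E → V × V)

lemma card_filter_iff (p q : E → Prop) [DecidablePred p] [DecidablePred q]
    (h : ∀ e, p e ↔ q e) :
    (Finset.univ.filter p).card = (Finset.univ.filter q).card := by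
  congr 1; exact Finset.filter_congr fun e _ => by rw [h]

lemma card_split (p q r : E → Prop) [DecidablePred p] [DecidablePred q] [DecidablePred r]
    (h : ∀ e, (if p e then (1:ℕ) else 0) = (if q e then 1 else 0) + (if r e then 1 else 0)) :
    (Finset.univ.filter p).card = (Finset.univ.filter q).card + (Finset.univ.filter r).card := by
  simp only [Finset.card_filter]
  rw [← Finset.sum_add_distrib]
  exact Finset.sum_congr rfl fun e _ => h e

lemma card_submod (p q r w : E → Prop) [DecidablePred p] [DecidablePred q] [DecidablePred r]
    [DecidablePred w]
    (h : ∀ e, (if p e then (1:ℕ) else 0) + (if q e then 1 else 0) ≤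
      (if r e then 1 else 0) + (if w e then 1 else 0)) :
    (Finset.univ.filter p).card + (Finset.univ.filter q).card ≤
      (Finset.univ.filter r).card + (Finset.univ.filter w).card := by
  simp only [Finset.card_filter]
  rw [← Finset.sum_add_distrib, ← Finset.sum_add_distrib]
  exact Finset.sum_le_sum fun e _ => h e

lemma sum_indeg (o : E → Bool) (X : Finset V) :
    ∑ v ∈ X, indeg ends o v = (Finset.univ.filter fun e => ohead ends o e ∈ X).card := by
  rw [Finset.card_eq_sum_card_fiberwise (f := ohead ends o) (s := Finset.univ.filter fun e => ohead ends o e ∈ X)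
    (t := X) (fun e he => (Finset.mem_filter.1 he).2)]
  refine Finset.sum_congr rfl fun v hv => ?_
  unfold indeg
  congr 1
  ext e
  simp only [Finset.mem_filter, Finset.mem_univ, true_and]
  exact ⟨fun h => ⟨h ▸ hv, h⟩, And.right⟩

lemma head_split (o : E → Bool) (X : Finset V) :
    (Finset.univ.filter fun e => ohead ends o e ∈ X).card = iG ends X + inCut ends o X := by
  unfold iG inCut
  apply card_split
  intro e
  by_cases h : o e <;> by_cases h1 : (ends e).1 ∈ X <;> by_cases h2 : (ends e).2 ∈ X <;>
    simp [ohead, otail, h, h1, h2]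

lemma sum_indeg_eq (o : E → Bool) (X : Finset V) :
    ∑ v ∈ X, indeg ends o v = iG ends X + inCut ends o X := by
  rw [sum_indeg, head_split]

lemma dG_split (o : E → Bool) (X : Finset V) :
    dG ends X = inCut ends o X + outCut ends o X := by
  unfold dG inCut outCut
  apply card_split
  intro e
  by_cases h : o e <;> by_cases h1 : (ends e).1 ∈ X <;> by_cases h2 : (ends e).2 ∈ X <;>
    simp [ohead, otail, h, h1, h2]

lemma outCut_compl (o : E → Bool) (X : Finset V) :
    outCut ends o X = inCut ends o Xᶜ := by
  unfold inCut outCut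
  apply card_filter_iff
  intro e
  simp only [Finset.mem_compl]
  tauto

lemma inCut_submod (o : E → Bool) (A B : Finset V) :
    inCut ends o (A ∪ B) + inCut ends o (A ∩ B) ≤ inCut ends o A + inCut ends o B := by
  unfold inCut
  apply card_submod
  intro e
  by_cases hA : ohead ends o e ∈ A <;> by_cases hB : ohead ends o e ∈ B <;>
    by_cases tA : otail ends o e ∈ A <;> by_cases tB : otail ends o e ∈ B <;>
    simp [hA, hB, tA, tB]

lemma outCut_submod (o : E → Bool) (A B : Finset V) :
    outCut ends o (A ∪ B) + outCut ends o (A ∩ B) ≤ outCut ends o A + outCut ends o B := by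
  unfold outCut
  apply card_submod
  intro e
  by_cases hA : ohead ends o e ∈ A <;> by_cases hB : ohead ends o e ∈ B <;>
    by_cases tA : otail ends o e ∈ A <;> by_cases tB : otail ends o e ∈ B <;>
    simp [hA, hB, tA, tB]

lemma sum_indeg_univ (o : E → Bool) :
    ∑ v, indeg ends o v = Fintype.card E := by
  rw [sum_indeg]
  rw [Finset.filter_true_of_mem (fun e _ => Finset.mem_univ _), Finset.card_univ]

lemma indeg_le_card (o : E → Bool) (v : V) : indeg ends o v ≤ Fintype.card E :=
  Finset.card_filter_le _ _

lemma inCut_univ (o : E → Bool) : inCut ends o Finset.univ = 0 := by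
  unfold inCut
  rw [Finset.card_eq_zero]
  ext e
  simp

lemma sum_dlt (o1 o2 : E → Bool) (X : Finset V) :
    ∑ v ∈ X, ((indeg ends o1 v : ℤ) - indeg ends o2 v)
      = (inCut ends o1 X : ℤ) - inCut ends o2 X := by
  rw [Finset.sum_sub_distrib]
  push_cast [← Nat.cast_sum]
  rw [sum_indeg_eq ends o1 X, sum_indeg_eq ends o2 X]
  push_cast
  ring

/-- a strongly connected orientation enters every proper nonempty set. -/
lemma one_le_inCut (o : E → Bool) (ho : ∀ u v : V, Reach ends o u v)
    (X : Finset V) (hne : X.Nonempty) (hpr : X ≠ Finset.univ) :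
    1 ≤ inCut ends o X := by
  obtain ⟨u, hu⟩ := hne
  have : ∃ w, w ∉ X := by
    by_contra hc
    push_neg at hc
    exact hpr (Finset.eq_univ_iff_forall.2 hc)
  obtain ⟨w, hw⟩ := this
  have key : ∀ a b : V, Reach ends o a b → b ∈ X → a ∉ X →
      ∃ e, ohead ends o e ∈ X ∧ otail ends o e ∉ X := by
    intro a b hr
    induction hr using Relation.ReflTransGen.head_induction_on with
    | refl => intro hb ha; exact absurd hb ha
    | head hstep _ ih =>
      rename_i x c _
      intro hb ha
      by_cases hc : c ∈ X
      · obtain ⟨e, he1, he2⟩ := hstep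
        exact ⟨e, he2 ▸ hc, he1 ▸ ha⟩
      · exact ih hb hc
  obtain ⟨e, h1, h2⟩ := key w u (ho w u) hu hw
  exact Finset.card_pos.2 ⟨e, Finset.mem_filter.2 ⟨Finset.mem_univ _, h1, h2⟩⟩

lemma one_le_outCut (o : E → Bool) (ho : ∀ u v : V, Reach ends o u v)
    (X : Finset V) (hne : X.Nonempty) (hpr : X ≠ Finset.univ) :
    1 ≤ outCut ends o X := by
  rw [outCut_compl]
  refine one_le_inCut ends o ho _ ?_ ?_
  · obtain ⟨w, hw⟩ : ∃ w, w ∉ X := by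
      by_contra hc; push_neg at hc; exact hpr (Finset.eq_univ_iff_forall.2 hc)
    exact ⟨w, Finset.mem_compl.2 hw⟩
  · obtain ⟨u, hu⟩ := hne
    intro h
    exact (Finset.mem_compl.1 (h ▸ Finset.mem_univ u)) hu

end CountSec
section BridgeSec
variable {V E : Type*}
variable (ends : E → V × V) (o : E → Bool)

lemma isDipath_iff_gwalk {s t : V} {L : List E} :
    IsDipath ends o s t L ↔ GWalk (otail ends o) (ohead ends o) s t L := by
  induction L generalizing s with
  | nil => exact Iff.rfl
  | cons e L ih => exact and_congr Iff.rfl ih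

lemma gwalk_reach {s t : V} {L : List E}
    (h : GWalk (otail ends o) (ohead ends o) s t L) : Reach ends o s t := by
  induction L generalizing s with
  | nil => exact h ▸ Relation.ReflTransGen.refl
  | cons e L ih =>
    exact Relation.ReflTransGen.head ⟨e, h.1, rfl⟩ (ih h.2)

lemma reach_gwalk {s t : V} (h : Reach ends o s t) :
    ∃ L, GWalk (otail ends o) (ohead ends o) s t L := by
  induction h with
  | refl => exact ⟨[], rfl⟩
  | tail _ hstep ih =>
    obtain ⟨L, hL⟩ := ih
    obtain ⟨e, he1, he2⟩ := hstep
    refine ⟨L ++ [e], gwalk_append hL ?_⟩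
    exact ⟨he1, he2⟩

lemma reach_step {u v : V} (e : E) (h1 : otail ends o e = u) (h2 : ohead ends o e = v) :
    Reach ends o u v :=
  Relation.ReflTransGen.single ⟨e, h1, h2⟩

end BridgeSec

section FlipSec
variable {V E : Type*} [Fintype V] [Fintype E] [DecidableEq V] [DecidableEq E]
variable (ends : E → V × V)

def flipF (o : E → Bool) (F : Finset E) : E → Bool :=
  fun e => if e ∈ F then !(o e) else o e

lemma ohead_flip_mem (o : E → Bool) {F : Finset E} {e : E} (h : e ∈ F) :
    ohead ends (flipF o F) e = otail ends o e := by
  unfold ohead otail flipF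
  by_cases ho : o e <;> simp [ho, h]

lemma otail_flip_mem (o : E → Bool) {F : Finset E} {e : E} (h : e ∈ F) :
    otail ends (flipF o F) e = ohead ends o e := by
  unfold ohead otail flipF
  by_cases ho : o e <;> simp [ho, h]

lemma ohead_flip_not (o : E → Bool) {F : Finset E} {e : E} (h : e ∉ F) :
    ohead ends (flipF o F) e = ohead ends o e := by
  unfold ohead flipF
  by_cases ho : o e <;> simp [ho, h]

lemma otail_flip_not (o : E → Bool) {F : Finset E} {e : E} (h : e ∉ F) :
    otail ends (flipF o F) e = otail ends o e := by
  unfold otail flipF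
  by_cases ho : o e <;> simp [ho, h]

/-- count of list-edges with given value of `f`, when `f` is injective on the walk. -/
lemma card_filter_list (L : List E) (f : E → V) (x : V) (hf : (L.map f).Nodup) :
    (Finset.univ.filter fun e => e ∈ L ∧ f e = x).card = if x ∈ L.map f then 1 else 0 := by
  induction L with
  | nil => simp
  | cons a L ih =>
    have hfa : f a ∉ L.map f := (List.nodup_cons.1 hf).1
    have haL : ∀ e ∈ L, ¬ (e = a) := by
      intro e he heq
      exact hfa (heq ▸ List.mem_map_of_mem (f := f) he)
    have hsplit : (Finset.univ.filter fun e => e ∈ a :: L ∧ f e = x).card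
        = (Finset.univ.filter fun e => e = a ∧ f e = x).card
          + (Finset.univ.filter fun e => e ∈ L ∧ f e = x).card := by
      apply card_split
      intro e
      by_cases h1 : e = a <;> by_cases h2 : e ∈ L <;> by_cases h3 : f e = x <;>
        simp_all
    rw [hsplit, ih (List.nodup_cons.1 hf).2]
    have h1 : (Finset.univ.filter fun e => e = a ∧ f e = x).card
        = if f a = x then 1 else 0 := by
      by_cases hfa2 : f a = x
      · rw [if_pos hfa2]
        rw [show (Finset.univ.filter fun e => e = a ∧ f e = x) = {a} from ?_]
        · simp
        · ext e
          simp only [Finset.mem_filter, Finset.mem_univ, true_and, Finset.mem_singleton]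
          constructor
          · exact fun h => h.1
          · rintro rfl; exact ⟨rfl, hfa2⟩
      · rw [if_neg hfa2]
        rw [Finset.card_eq_zero]
        ext e
        simp only [Finset.mem_filter, Finset.mem_univ, true_and, Finset.notMem_empty,
          iff_false, not_and]
        rintro rfl; exact hfa2
    rw [h1]
    by_cases hx : x = f a
    · subst hx
      simp [hfa]
    · simp only [List.map_cons, List.mem_cons]
      rw [if_neg (fun h => hx h.symm)]
      by_cases hxL : x ∈ L.map f <;> simp [hxL, hx, Ne.symm hx]

end FlipSec
section WalkFactsSec
variable {V α : Type*} {tl hd : α → V}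

/-- facts about the tails/heads of a vertex-simple nontrivial walk. -/
lemma gwalk_facts {s t : V} {L : List α} (hw : GWalk tl hd s t L)
    (hnd : (s :: L.map hd).Nodup) (hst : s ≠ t) :
    s ∈ L.map tl ∧ s ∉ L.map hd ∧ t ∈ L.map hd ∧ t ∉ L.map tl ∧
      (∀ x, x ≠ s → x ≠ t → (x ∈ L.map tl ↔ x ∈ L.map hd)) := by
  have hLne : L ≠ [] := by rintro rfl; exact hst hw
  have hshd : s ∉ L.map hd := (List.nodup_cons.1 hnd).1
  have htl_eq : L.map tl = (s :: L.map hd).dropLast := gwalk_map_tl hw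
  have hlast : (s :: L.map hd).getLast (by simp) = t := gwalk_trace_last hw
  have hwne : L.map hd ≠ [] := by simpa using hLne
  have htrace : (s :: L.map hd) = (s :: L.map hd).dropLast ++ [t] := by
    conv_lhs => rw [← List.dropLast_append_getLast (l := s :: L.map hd) (by simp)]
    rw [hlast]
  have hthd : t ∈ L.map hd := by
    have : t ∈ s :: L.map hd := by
      rw [htrace]; exact List.mem_append_right _ (List.mem_singleton_self t)
    rcases List.mem_cons.1 this with h | h
    · exact absurd h.symm hst
    · exact h
  have httl : t ∉ L.map tl := by
    rw [htl_eq]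
    intro hmem
    have hnd2 : ((s :: L.map hd).dropLast ++ [t]).Nodup := htrace ▸ hnd
    have := List.disjoint_of_nodup_append hnd2
    exact this hmem (List.mem_singleton_self t)
  have hstl : s ∈ L.map tl := by
    rw [htl_eq]
    cases L with
    | nil => exact absurd rfl hLne
    | cons a M => simp
  refine ⟨hstl, hshd, hthd, httl, fun x hxs hxt => ?_⟩
  have hdl : (s :: L.map hd).dropLast = s :: (L.map hd).dropLast := by
    cases hmap : L.map hd with
    | nil => exact absurd hmap hwne
    | cons b w => simp
  have hsplit : L.map hd = (L.map hd).dropLast ++ [t] := by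
    have := htrace
    rw [hdl] at this
    exact (List.cons_inj_right s).1 this
  constructor
  · intro hx
    rw [htl_eq, hdl] at hx
    rcases List.mem_cons.1 hx with h | h
    · exact absurd h hxs
    · rw [hsplit]; exact List.mem_append_left _ h
  · intro hx
    rw [htl_eq, hdl]
    rw [hsplit] at hx
    rcases List.mem_append.1 hx with h | h
    · exact List.mem_cons_of_mem _ h
    · simp only [List.mem_singleton] at h
      exact absurd h hxt
end WalkFactsSec

section IndegFlipSec
variable {V E : Type*} [Fintype V] [Fintype E] [DecidableEq V] [DecidableEq E]
variable (ends : E → V × V)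

lemma indeg_flip (o : E → Bool) {s t : V} {L : List E}
    (hw : GWalk (otail ends o) (ohead ends o) s t L)
    (hnd : (s :: L.map (ohead ends o)).Nodup) (hst : s ≠ t) :
    indeg ends (flipF o L.toFinset) s = indeg ends o s + 1 ∧
    indeg ends o t = indeg ends (flipF o L.toFinset) t + 1 ∧
    ∀ x, x ≠ s → x ≠ t → indeg ends (flipF o L.toFinset) x = indeg ends o x := by
  obtain ⟨hstl, hshd, hthd, httl, hmid⟩ := gwalk_facts hw hnd hst
  have hhd_nd : (L.map (ohead ends o)).Nodup := (List.nodup_cons.1 hnd).2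
  have htl_nd : (L.map (otail ends o)).Nodup := by
    rw [gwalk_map_tl hw]
    exact hnd.sublist (List.dropLast_sublist _)
  -- master formulas
  have master : ∀ x : V,
      indeg ends (flipF o L.toFinset) x
        = (Finset.univ.filter fun e => e ∈ L ∧ otail ends o e = x).card
          + (Finset.univ.filter fun e => ¬ (e ∈ L) ∧ ohead ends o e = x).card ∧
      indeg ends o x
        = (Finset.univ.filter fun e => e ∈ L ∧ ohead ends o e = x).card
          + (Finset.univ.filter fun e => ¬ (e ∈ L) ∧ ohead ends o e = x).card := by
    intro x
    constructor
    · unfold indeg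
      apply card_split
      intro e
      by_cases hL : e ∈ L
      · rw [ohead_flip_mem ends o (List.mem_toFinset.2 hL)]
        simp [hL]
      · rw [ohead_flip_not ends o (fun hc => hL (List.mem_toFinset.1 hc))]
        simp [hL]
    · unfold indeg
      apply card_split
      intro e
      by_cases hL : e ∈ L <;> simp [hL]
  have ctl : ∀ x, (Finset.univ.filter fun e => e ∈ L ∧ otail ends o e = x).card
      = if x ∈ L.map (otail ends o) then 1 else 0 := fun x =>
    card_filter_list L (otail ends o) x htl_nd
  have chd : ∀ x, (Finset.univ.filter fun e => e ∈ L ∧ ohead ends o e = x).card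
      = if x ∈ L.map (ohead ends o) then 1 else 0 := fun x =>
    card_filter_list L (ohead ends o) x hhd_nd
  refine ⟨?_, ?_, ?_⟩
  · rw [(master s).1, ctl s, if_pos hstl]
    have : indeg ends o s = 0 + (Finset.univ.filter
        fun e => ¬ (e ∈ L) ∧ ohead ends o e = s).card := by
      rw [(master s).2, chd s, if_neg hshd]
    omega
  · rw [(master t).1, (master t).2, ctl t, chd t, if_pos hthd, if_neg httl]
    omega
  · intro x hxs hxt
    rw [(master x).1, (master x).2, ctl x, chd x]
    by_cases h : x ∈ L.map (otail ends o)
    · rw [if_pos h, if_pos ((hmid x hxs hxt).1 h)]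
    · rw [if_neg h, if_neg (fun hc => h ((hmid x hxs hxt).2 hc))]

/-- strong connectivity is preserved when flipping a vertex-simple dipath,
provided a second arc-disjoint dipath with the same ends exists. -/
lemma reach_flip (o : E → Bool) {s t : V} {L : List E}
    (hw : GWalk (otail ends o) (ohead ends o) s t L)
    (hnd : (s :: L.map (ohead ends o)).Nodup)
    {Q : List E} (hQ : GWalk (otail ends o) (ohead ends o) s t Q)
    (hQL : ∀ e ∈ Q, e ∉ L)
    (ho : ∀ u v : V, Reach ends o u v) :
    ∀ u v : V, Reach ends (flipF o L.toFinset) u v := by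
  set o2 := flipF o L.toFinset with ho2
  -- from any vertex of the walk one can reach the start s
  have allreach : ∀ (L' : List E) (x t' : V), GWalk (otail ends o) (ohead ends o) x t' L' →
      (∀ e ∈ L', e ∈ L) → ∀ y ∈ x :: L'.map (ohead ends o), Reach ends o2 y x := by
    intro L'
    induction L' with
    | nil =>
      intro x t' _ _ y hy
      simp only [List.map_nil, List.mem_singleton] at hy
      exact hy ▸ Relation.ReflTransGen.refl
    | cons e L' ih =>
      intro x t' hw' hmem y hy
      rcases List.mem_cons.1 hy with rfl | hy'
      · exact Relation.ReflTransGen.refl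
      · have h1 : Reach ends o2 y (ohead ends o e) :=
          ih (ohead ends o e) t' hw'.2 (fun a ha => hmem a (List.mem_cons_of_mem _ ha)) y hy'
        have heL : e ∈ L.toFinset := List.mem_toFinset.2 (hmem e (List.mem_cons_self))
        have hstep : Reach ends o2 (ohead ends o e) x :=
          reach_step ends o2 e ((otail_flip_mem ends o heL).trans rfl)
            ((ohead_flip_mem ends o heL).trans hw'.1)
        exact h1.trans hstep
  -- from the end t' of any subwalk one can reach its start... (reverse direction along flips)
  have revreach : ∀ (L' : List E) (x t' : V), GWalk (otail ends o) (ohead ends o) x t' L' →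
      (∀ e ∈ L', e ∈ L) → Reach ends o2 t' x := by
    intro L'
    induction L' with
    | nil => intro x t' h _; exact h ▸ Relation.ReflTransGen.refl
    | cons e L' ih =>
      intro x t' hw' hmem
      have h1 : Reach ends o2 t' (ohead ends o e) :=
        ih _ _ hw'.2 (fun a ha => hmem a (List.mem_cons_of_mem _ ha))
      have heL : e ∈ L.toFinset := List.mem_toFinset.2 (hmem e (List.mem_cons_self))
      have hstep : Reach ends o2 (ohead ends o e) x :=
        reach_step ends o2 e ((otail_flip_mem ends o heL).trans rfl)
          ((ohead_flip_mem ends o heL).trans hw'.1)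
      exact h1.trans hstep
  -- Q is intact
  have hQ2 : GWalk (otail ends o2) (ohead ends o2) s t Q := by
    clear hw hnd
    induction Q generalizing s with
    | nil => exact hQ
    | cons e Q ih =>
      have heL : e ∉ L.toFinset := fun hc => hQL e (List.mem_cons_self) (List.mem_toFinset.1 hc)
      refine ⟨(otail_flip_not ends o heL).trans hQ.1, ?_⟩
      rw [ohead_flip_not ends o heL]
      exact ih hQ.2 (fun a ha => hQL a (List.mem_cons_of_mem _ ha))
  have hreach_st : Reach ends o2 s t := gwalk_reach ends o2 hQ2
  -- simulate a single original arc
  have sim : ∀ e : E, Reach ends o2 (otail ends o e) (ohead ends o e) := by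
    intro e
    by_cases heL : e ∈ L
    · have hu : otail ends o e ∈ s :: L.map (ohead ends o) := by
        have h0 : otail ends o e ∈ L.map (otail ends o) := List.mem_map_of_mem heL
        rw [gwalk_map_tl hw] at h0
        exact (List.dropLast_sublist _).subset h0
      have hv : ohead ends o e ∈ s :: L.map (ohead ends o) :=
        List.mem_cons_of_mem _ (List.mem_map_of_mem heL)
      have h1 : Reach ends o2 (otail ends o e) s := allreach L s t hw (fun _ h => h) _ hu
      obtain ⟨L₂, hw2, _, hsfx⟩ := gwalk_split hw hv
      have h2 : Reach ends o2 t (ohead ends o e) :=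
        revreach L₂ _ _ hw2 (fun a ha => hsfx.subset ha)
      exact (h1.trans hreach_st).trans h2
    · exact reach_step ends o2 e
        (otail_flip_not ends o (fun hc => heL (List.mem_toFinset.1 hc)))
        (ohead_flip_not ends o (fun hc => heL (List.mem_toFinset.1 hc)))
  intro u v
  have h := ho u v
  induction h with
  | refl => exact Relation.ReflTransGen.refl
  | tail _ hstep ih =>
    obtain ⟨e, he1, he2⟩ := hstep
    exact ih.trans (he1 ▸ he2 ▸ sim e)

end IndegFlipSec
section TrailSec
variable {V E : Type*} [Fintype V] [Fintype E] [DecidableEq V] [DecidableEq E]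
variable (ends : E → V × V)

/-- number of arcs of `S` with head `v`. -/
def inS (o : E → Bool) (S : Finset E) (v : V) : ℕ :=
  (S.filter fun e => ohead ends o e = v).card

/-- number of arcs of `S` with tail `v`. -/
def outS (o : E → Bool) (S : Finset E) (v : V) : ℕ :=
  (S.filter fun e => otail ends o e = v).card

lemma inS_erase (o : E → Bool) {S : Finset E} {e : E} (he : e ∈ S) (v : V) :
    inS ends o (S.erase e) v + (if ohead ends o e = v then 1 else 0) = inS ends o S v := by
  unfold inS
  rw [Finset.filter_erase]
  by_cases h : ohead ends o e = v
  · rw [if_pos h, Finset.card_erase_of_mem (Finset.mem_filter.2 ⟨he, h⟩)]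
    have : 0 < (S.filter fun e' => ohead ends o e' = v).card :=
      Finset.card_pos.2 ⟨e, Finset.mem_filter.2 ⟨he, h⟩⟩
    omega
  · have hne : e ∉ S.filter fun e' => ohead ends o e' = v :=
      fun hc => h (Finset.mem_filter.1 hc).2
    rw [if_neg h, Finset.erase_eq_of_notMem hne]
    omega

lemma outS_erase (o : E → Bool) {S : Finset E} {e : E} (he : e ∈ S) (v : V) :
    outS ends o (S.erase e) v + (if otail ends o e = v then 1 else 0) = outS ends o S v := by
  unfold outS
  rw [Finset.filter_erase]
  by_cases h : otail ends o e = v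
  · rw [if_pos h, Finset.card_erase_of_mem (Finset.mem_filter.2 ⟨he, h⟩)]
    have : 0 < (S.filter fun e' => otail ends o e' = v).card :=
      Finset.card_pos.2 ⟨e, Finset.mem_filter.2 ⟨he, h⟩⟩
    omega
  · have hne : e ∉ S.filter fun e' => otail ends o e' = v :=
      fun hc => h (Finset.mem_filter.1 hc).2
    rw [if_neg h, Finset.erase_eq_of_notMem hne]
    omega

/-- Euler-style trail extraction: if no vertex except `t` has in-degree exceeding
out-degree in `S`, and `u` has strictly larger out-degree (when `u ≠ t`), then there
is a trail from `u` to `t` inside `S`. -/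
lemma trail_extract (o : E → Bool) (hloop : ∀ e : E, otail ends o e ≠ ohead ends o e)
    (t : V) (S : Finset E) :
    ∀ u : V, (∀ v, v ≠ t → inS ends o S v ≤ outS ends o S v) →
    (u ≠ t → inS ends o S u + 1 ≤ outS ends o S u) →
    ∃ L, GWalk (otail ends o) (ohead ends o) u t L ∧ L.Nodup ∧ ∀ e ∈ L, e ∈ S := by
  induction S using Finset.strongInduction with
  | _ S ih =>
    intro u h1 h2
    by_cases hut : u = t
    · exact ⟨[], hut, List.nodup_nil, by simp⟩
    · have hout : 1 ≤ outS ends o S u := le_trans (Nat.le_add_left _ _) (h2 hut)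
      obtain ⟨e, heS⟩ := Finset.card_pos.1 hout
      have heS' := Finset.mem_filter.1 heS
      obtain ⟨heS, hetl⟩ := heS'
      set w := ohead ends o e with hw
      have hwu : w ≠ u := fun h => hloop e (hetl.trans h.symm)
      have h1' : ∀ v, v ≠ t → inS ends o (S.erase e) v ≤ outS ends o (S.erase e) v := by
        intro v hv
        have A := inS_erase ends o heS v
        have B := outS_erase ends o heS v
        by_cases hv2 : otail ends o e = v
        · have hvu : v = u := hv2 ▸ hetl ▸ rfl
          have hv1 : ¬ (ohead ends o e = v) := fun h => hloop e (hv2.trans h.symm)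
          rw [if_neg hv1] at A
          rw [if_pos hv2] at B
          subst hvu
          have C := h2 hv
          omega
        · rw [if_neg hv2] at B
          have C := h1 v hv
          by_cases hv1 : ohead ends o e = v
          · rw [if_pos hv1] at A; omega
          · rw [if_neg hv1] at A; omega
      have h2' : w ≠ t → inS ends o (S.erase e) w + 1 ≤ outS ends o (S.erase e) w := by
        intro hwt
        have A := inS_erase ends o heS w
        have B := outS_erase ends o heS w
        have C := h1 w hwt
        rw [if_pos rfl] at A
        rw [if_neg (fun h => hwu (h.symm.trans hetl))] at B
        omega
      obtain ⟨L, hL, hnd, hsub⟩ := ih (S.erase e) (Finset.erase_ssubset heS) w h1' h2'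
      refine ⟨e :: L, ⟨hetl, hL⟩,
        List.nodup_cons.2 ⟨fun hc => (Finset.notMem_erase e S) (hsub e hc), hnd⟩, ?_⟩
      intro a ha
      rcases List.mem_cons.1 ha with rfl | ha'
      · exact heS
      · exact Finset.mem_of_mem_erase (hsub a ha')

end TrailSec
section CountPSec
variable {V α : Type*} [DecidableEq V]

lemma countP_split (p q : α → Bool) (l : List α) :
    l.countP (fun a => p a && q a) + l.countP (fun a => p a && !q a) = l.countP p := by
  induction l with
  | nil => simp
  | cons a l ih =>
    simp only [List.countP_cons]
    by_cases hp : p a <;> by_cases hq : q a <;> simp [hp, hq] <;> omega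

lemma gwalk_countP_div {tl hd : α → V} {s t : V} {L : List α}
    (hw : GWalk tl hd s t L) (v : V) :
    (L.countP (fun a => decide (hd a = v)) : ℤ) - L.countP (fun a => decide (tl a = v))
      = (if v = t then 1 else 0) - (if v = s then 1 else 0) := by
  induction L generalizing s with
  | nil => have h : s = t := hw; subst h; simp
  | cons a L ih =>
    have h2 := ih hw.2
    have hts : tl a = s := hw.1
    have e1 : (a :: L).countP (fun x => decide (hd x = v))
        = L.countP (fun x => decide (hd x = v)) + (if v = hd a then 1 else 0) := by
      rw [List.countP_cons]
      congr 1
      by_cases h : v = hd a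
      · simp [h]
      · simp [h, Ne.symm h]
    have e2 : (a :: L).countP (fun x => decide (tl x = v))
        = L.countP (fun x => decide (tl x = v)) + (if v = s then 1 else 0) := by
      rw [List.countP_cons, hts]
      congr 1
      by_cases h : v = s
      · simp [h]
      · simp [h, Ne.symm h]
    rw [e1, e2]
    push_cast
    linarith [h2]

lemma gwalk_countP_cross {tl hd : α → V} {s t : V} {L : List α}
    (hw : GWalk tl hd s t L) (p : V → Prop) [DecidablePred p] :
    (L.countP (fun a => decide (¬ p (tl a) ∧ p (hd a))) : ℤ)
      - L.countP (fun a => decide (p (tl a) ∧ ¬ p (hd a)))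
      = (if p t then 1 else 0) - (if p s then 1 else 0) := by
  induction L generalizing s with
  | nil => have h : s = t := hw; subst h; simp
  | cons a L ih =>
    have h2 := ih hw.2
    have hts : tl a = s := hw.1
    have e1 : (a :: L).countP (fun x => decide (¬ p (tl x) ∧ p (hd x)))
        = L.countP (fun x => decide (¬ p (tl x) ∧ p (hd x)))
          + (if ¬ p s ∧ p (hd a) then 1 else 0) := by
      rw [List.countP_cons, hts]
      congr 1
      by_cases h : ¬ p s ∧ p (hd a) <;> simp [h]
    have e2 : (a :: L).countP (fun x => decide (p (tl x) ∧ ¬ p (hd x)))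
        = L.countP (fun x => decide (p (tl x) ∧ ¬ p (hd x)))
          + (if p s ∧ ¬ p (hd a) then 1 else 0) := by
      rw [List.countP_cons, hts]
      congr 1
      by_cases h : p s ∧ ¬ p (hd a) <;> simp [h]
    rw [e1, e2]
    push_cast
    by_cases hps : p s <;> by_cases hph : p (hd a) <;>
      simp only [hps, hph, not_true, not_false_iff, true_and, and_true, false_and, and_false,
        if_true, if_false, if_pos, if_neg, not_false_eq_true] at h2 ⊢ <;>
      simp_all <;> linarith

end CountPSec

section BridgeCountSec
variable {V E : Type*} [Fintype V] [Fintype E] [DecidableEq V] [DecidableEq E]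
variable (ends : E → V × V)

lemma card_toFinset_filter (L : List E) (hnd : L.Nodup) (q : E → Prop) [DecidablePred q] :
    (L.toFinset.filter fun e => q e).card = L.countP (fun e => decide (q e)) := by
  induction L with
  | nil => simp
  | cons a L ih =>
    have haL : a ∉ L := (List.nodup_cons.1 hnd).1
    have ih' := ih (List.nodup_cons.1 hnd).2
    simp only [List.toFinset_cons, Finset.filter_insert, List.countP_cons]
    by_cases hq : q a
    · rw [if_pos hq, Finset.card_insert_of_notMem
        (fun hc => haL (List.mem_toFinset.1 (Finset.filter_subset _ _ hc))), ih']
      simp [hq]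
    · rw [if_neg hq, ih']
      simp [hq]

lemma inS_toFinset (o : E → Bool) (L : List E) (hnd : L.Nodup) (v : V) :
    inS ends o L.toFinset v = L.countP (fun e => decide (ohead ends o e = v)) :=
  card_toFinset_filter L hnd _

lemma outS_toFinset (o : E → Bool) (L : List E) (hnd : L.Nodup) (v : V) :
    outS ends o L.toFinset v = L.countP (fun e => decide (otail ends o e = v)) :=
  card_toFinset_filter L hnd _

lemma inS_union (o : E → Bool) {A B : Finset E} (h : Disjoint A B) (v : V) :
    inS ends o (A ∪ B) v = inS ends o A v + inS ends o B v := by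
  unfold inS
  rw [Finset.filter_union, Finset.card_union_of_disjoint]
  exact Finset.disjoint_filter_filter h

lemma outS_union (o : E → Bool) {A B : Finset E} (h : Disjoint A B) (v : V) :
    outS ends o (A ∪ B) v = outS ends o A v + outS ends o B v := by
  unfold outS
  rw [Finset.filter_union, Finset.card_union_of_disjoint]
  exact Finset.disjoint_filter_filter h

lemma inS_sdiff (o : E → Bool) {A B : Finset E} (h : B ⊆ A) (v : V) :
    inS ends o (A \ B) v + inS ends o B v = inS ends o A v := by
  unfold inS
  rw [show (A \ B).filter (fun e => ohead ends o e = v)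
      = A.filter (fun e => ohead ends o e = v) \ B.filter (fun e => ohead ends o e = v) from ?_]
  · exact Finset.card_sdiff_add_card_eq_card (Finset.filter_subset_filter _ h)
  · ext e
    simp only [Finset.mem_filter, Finset.mem_sdiff]
    tauto

lemma outS_sdiff (o : E → Bool) {A B : Finset E} (h : B ⊆ A) (v : V) :
    outS ends o (A \ B) v + outS ends o B v = outS ends o A v := by
  unfold outS
  rw [show (A \ B).filter (fun e => otail ends o e = v)
      = A.filter (fun e => otail ends o e = v) \ B.filter (fun e => otail ends o e = v) from ?_]
  · exact Finset.card_sdiff_add_card_eq_card (Finset.filter_subset_filter _ h)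
  · ext e
    simp only [Finset.mem_filter, Finset.mem_sdiff]
    tauto
end BridgeCountSec
section MengerSec
variable {V E : Type*} [Fintype V] [Fintype E] [DecidableEq V] [DecidableEq E]
variable (ends : E → V × V) (o : E → Bool)

/-- tail of a residual arc: `(e, true)` is `e` forward, `(e, false)` is `e` backward. -/
def rtl : E × Bool → V := fun a => if a.2 then otail ends o a.1 else ohead ends o a.1

/-- head of a residual arc. -/
def rhd : E × Bool → V := fun a => if a.2 then ohead ends o a.1 else otail ends o a.1

/-- validity of a residual arc w.r.t. a set of path edges `P`. -/
def rvalid (P : Finset E) (a : E × Bool) : Prop := if a.2 then a.1 ∉ P else a.1 ∈ P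

/-- residual step relation. -/
def RStep (P : Finset E) (u v : V) : Prop :=
  ∃ a, rvalid P a ∧ rtl ends o a = u ∧ rhd ends o a = v

lemma rsteps_to_walk {P : Finset E} {s v : V}
    (h : Relation.ReflTransGen (RStep ends o P) s v) :
    ∃ M : List (E × Bool), GWalk (rtl ends o) (rhd ends o) s v M ∧ ∀ a ∈ M, rvalid P a := by
  induction h with
  | refl => exact ⟨[], rfl, by simp⟩
  | tail _ hstep ih =>
    obtain ⟨M, hM, hMv⟩ := ih
    obtain ⟨a, hav, ha1, ha2⟩ := hstep
    refine ⟨M ++ [a], gwalk_append hM ⟨ha1, ha2⟩, ?_⟩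
    intro x hx
    rcases List.mem_append.1 hx with hx | hx
    · exact hMv x hx
    · rw [List.mem_singleton.1 hx]; exact hav

lemma menger2 (hloop : ∀ e : E, otail ends o e ≠ ohead ends o e)
    (ho : ∀ u v : V, Reach ends o u v) {s t : V} (hst : s ≠ t)
    (hsep : ∀ X : Finset V, t ∈ X → s ∉ X → X ≠ Finset.univ → 2 ≤ inCut ends o X) :
    ∃ L₁ L₂ : List E, IsDipath ends o s t L₁ ∧ IsDipath ends o s t L₂ ∧ L₁.Disjoint L₂ := by
  classical
  obtain ⟨P0, hP0⟩ := reach_gwalk ends o (ho s t)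
  obtain ⟨P, hP, hPtrace, _⟩ := gwalk_simple hP0
  have hPnd : P.Nodup := gwalk_nodup_edges hP hPtrace
  set Pf := P.toFinset with hPf
  by_cases hZ : Relation.ReflTransGen (RStep ends o Pf) s t
  · -- augmenting path exists: build two arc-disjoint trails
    obtain ⟨M0, hM0, hMv0⟩ := rsteps_to_walk ends o hZ
    obtain ⟨M, hM, hMtrace, hMsub⟩ := gwalk_simple hM0
    have hMv : ∀ a ∈ M, rvalid Pf a := fun a ha => hMv0 a (hMsub a ha)
    have hMnd : M.Nodup := gwalk_nodup_edges hM hMtrace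
    have hfst : (M.map Prod.fst).Nodup := by
      refine List.Nodup.map_on ?_ hMnd
      intro x hx y hy hxy
      have hvx := hMv x hx
      have hvy := hMv y hy
      have : x.2 = y.2 := by
        by_contra hb
        rcases Bool.eq_false_or_eq_true x.2 with h2 | h2 <;>
          rcases Bool.eq_false_or_eq_true y.2 with h3 | h3
        · exact hb (h2.trans h3.symm)
        · simp [rvalid, h2, h3] at hvx hvy
          first
          | exact hvy (by rwa [hxy] at hvx)
          | exact hvx (by rwa [← hxy] at hvy)
        · simp [rvalid, h2, h3] at hvx hvy
          first
          | exact hvy (by rwa [hxy] at hvx)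
          | exact hvx (by rwa [← hxy] at hvy)
        · exact hb (h2.trans h3.symm)
      exact Prod.ext hxy this
    set Fl := (M.filter (fun a => a.2)).map Prod.fst with hFl
    set Bl := (M.filter (fun a => !a.2)).map Prod.fst with hBl
    have hFlnd : Fl.Nodup := hfst.sublist (List.filter_sublist.map _)
    have hBlnd : Bl.Nodup := hfst.sublist (List.filter_sublist.map _)
    have hFlP : ∀ e ∈ Fl, e ∉ Pf := by
      intro e he
      rw [hFl] at he
      obtain ⟨a, ha, rfl⟩ := List.mem_map.1 he
      have := hMv a (List.mem_of_mem_filter ha)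
      have h2 : a.2 = true := by simpa using List.of_mem_filter ha
      unfold rvalid at this
      rwa [h2, if_pos rfl] at this
    have hBlP : ∀ e ∈ Bl, e ∈ Pf := by
      intro e he
      rw [hBl] at he
      obtain ⟨a, ha, rfl⟩ := List.mem_map.1 he
      have := hMv a (List.mem_of_mem_filter ha)
      have h2 : a.2 = false := by simpa using List.of_mem_filter ha
      unfold rvalid at this
      rwa [h2] at this
    set S : Finset E := (Pf \ Bl.toFinset) ∪ Fl.toFinset with hS
    have hdisj : Disjoint (Pf \ Bl.toFinset) Fl.toFinset := by
      rw [Finset.disjoint_right]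
      intro e he
      rw [Finset.mem_sdiff]
      intro ⟨h1, _⟩
      exact hFlP e (List.mem_toFinset.1 he) h1
    have hBsub : Bl.toFinset ⊆ Pf := fun e he => hBlP e (List.mem_toFinset.1 he)
    -- divergence computation
    have hdiv : ∀ v, (inS ends o S v : ℤ) - outS ends o S v
        = (if v = t then 2 else 0) - (if v = s then 2 else 0) := by
      intro v
      have c1 := inS_union ends o hdisj v
      have c1' := outS_union ends o hdisj v
      rw [← hS] at c1 c1' 
      have c2 := inS_sdiff ends o hBsub v
      have c2' := outS_sdiff ends o hBsub v
      have bP := inS_toFinset ends o P hPnd v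
      have bP' := outS_toFinset ends o P hPnd v
      have bF := inS_toFinset ends o Fl hFlnd v
      have bF' := outS_toFinset ends o Fl hFlnd v
      have bB := inS_toFinset ends o Bl hBlnd v
      have bB' := outS_toFinset ends o Bl hBlnd v
      have dP := gwalk_countP_div hP v
      have dM := gwalk_countP_div hM v
      -- split the move counts by direction
      have sh := countP_split (fun a : E × Bool => decide (rhd ends o a = v)) (fun a => a.2) M
      have st' := countP_split (fun a : E × Bool => decide (rtl ends o a = v)) (fun a => a.2) M
      beta_reduce at sh st'
      rw [← hPf] at bP bP' 
      -- forward moves: rhd = ohead, rtl = otail ; backward: rhd = otail, rtl = ohead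
      have eF : M.countP (fun a => decide (rhd ends o a = v) && a.2)
          = Fl.countP (fun e => decide (ohead ends o e = v)) := by
        rw [hFl, List.countP_map, List.countP_filter]
        refine (List.countP_congr ?_).symm
        intro a _
        cases h2 : a.2 <;> simp [rhd, h2, Function.comp]
      have eF' : M.countP (fun a => decide (rtl ends o a = v) && a.2)
          = Fl.countP (fun e => decide (otail ends o e = v)) := by
        rw [hFl, List.countP_map, List.countP_filter]
        refine (List.countP_congr ?_).symm
        intro a _
        cases h2 : a.2 <;> simp [rtl, h2, Function.comp]
      have eB : M.countP (fun a => decide (rhd ends o a = v) && !a.2)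
          = Bl.countP (fun e => decide (otail ends o e = v)) := by
        rw [hBl, List.countP_map, List.countP_filter]
        refine (List.countP_congr ?_).symm
        intro a _
        cases h2 : a.2 <;> simp [rhd, h2, Function.comp]
      have eB' : M.countP (fun a => decide (rtl ends o a = v) && !a.2)
          = Bl.countP (fun e => decide (ohead ends o e = v)) := by
        rw [hBl, List.countP_map, List.countP_filter]
        refine (List.countP_congr ?_).symm
        intro a _
        cases h2 : a.2 <;> simp [rtl, h2, Function.comp]
      rw [eF, eB] at sh
      rw [eF', eB'] at st'
      rcases eq_or_ne v t with hvt | hvt <;> rcases eq_or_ne v s with hvs | hvs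
      · exact absurd (hvs.symm.trans hvt) hst
      · rw [if_pos hvt, if_neg hvs] at dP dM ⊢
        omega
      · rw [if_neg hvt, if_pos hvs] at dP dM ⊢
        omega
      · rw [if_neg hvt, if_neg hvs] at dP dM ⊢
        omega
    -- extract the two trails
    have h1 : ∀ v, v ≠ t → inS ends o S v ≤ outS ends o S v := by
      intro v hv
      have hd := hdiv v
      rw [if_neg hv] at hd
      rcases eq_or_ne v s with hvs | hvs
      · rw [if_pos hvs] at hd; omega
      · rw [if_neg hvs] at hd; omega
    have h2 : inS ends o S s + 1 ≤ outS ends o S s := by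
      have hd := hdiv s
      rw [if_neg hst, if_pos rfl] at hd
      omega
    obtain ⟨L₁, hL₁, hL₁nd, hL₁S⟩ := trail_extract ends o hloop t S s h1 (fun _ => h2)
    have hL₁sub : L₁.toFinset ⊆ S := fun e he => hL₁S e (List.mem_toFinset.1 he)
    have hdiv2 : ∀ v, (inS ends o (S \ L₁.toFinset) v : ℤ) - outS ends o (S \ L₁.toFinset) v
        = (if v = t then 1 else 0) - (if v = s then 1 else 0) := by
      intro v
      have c2 := inS_sdiff ends o hL₁sub v
      have c2' := outS_sdiff ends o hL₁sub v
      have b1 := inS_toFinset ends o L₁ hL₁nd v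
      have b1' := outS_toFinset ends o L₁ hL₁nd v
      have d1 := gwalk_countP_div hL₁ v
      have d0 := hdiv v
      rcases eq_or_ne v t with hvt | hvt <;> rcases eq_or_ne v s with hvs | hvs
      · exact absurd (hvs.symm.trans hvt) hst
      · rw [if_pos hvt, if_neg hvs] at d1 d0 ⊢
        omega
      · rw [if_neg hvt, if_pos hvs] at d1 d0 ⊢
        omega
      · rw [if_neg hvt, if_neg hvs] at d1 d0 ⊢
        omega
    have h1' : ∀ v, v ≠ t → inS ends o (S \ L₁.toFinset) v ≤ outS ends o (S \ L₁.toFinset) v := by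
      intro v hv
      have hd := hdiv2 v
      rw [if_neg hv] at hd
      rcases eq_or_ne v s with hvs | hvs
      · rw [if_pos hvs] at hd; omega
      · rw [if_neg hvs] at hd; omega
    have h2' : inS ends o (S \ L₁.toFinset) s + 1 ≤ outS ends o (S \ L₁.toFinset) s := by
      have hd := hdiv2 s
      rw [if_neg hst, if_pos rfl] at hd
      omega
    obtain ⟨L₂, hL₂, hL₂nd, hL₂S⟩ :=
      trail_extract ends o hloop t (S \ L₁.toFinset) s h1' (fun _ => h2')
    refine ⟨L₁, L₂, (isDipath_iff_gwalk ends o).2 hL₁, (isDipath_iff_gwalk ends o).2 hL₂, ?_⟩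
    intro e he1 he2
    exact (Finset.mem_sdiff.1 (hL₂S e he2)).2 (List.mem_toFinset.2 he1)
  · -- no augmenting path : derive a contradiction with `hsep`
    set X : Finset V :=
      Finset.univ.filter (fun v => ¬ Relation.ReflTransGen (RStep ends o Pf) s v) with hX
    have hmemX : ∀ v, v ∈ X ↔ ¬ Relation.ReflTransGen (RStep ends o Pf) s v := by
      intro v
      rw [hX, Finset.mem_filter]
      simp
    have htX : t ∈ X := (hmemX t).2 hZ
    have hsX : s ∉ X := fun hc => (hmemX s).1 hc Relation.ReflTransGen.refl
    have hXuniv : X ≠ Finset.univ := fun h => hsX (h ▸ Finset.mem_univ s)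
    -- every arc entering X belongs to P
    have hent : ∀ e : E, ohead ends o e ∈ X → otail ends o e ∉ X → e ∈ P := by
      intro e hh ht'
      by_contra hg
      have hreach : Relation.ReflTransGen (RStep ends o Pf) s (otail ends o e) := by
        by_contra hc
        exact ht' ((hmemX _).2 hc)
      have hval : rvalid Pf (e, true) := by
        have hne : e ∉ Pf := fun hc => hg (List.mem_toFinset.1 (by rwa [hPf] at hc))
        simpa [rvalid] using hne
      have hstep : RStep ends o Pf (otail ends o e) (ohead ends o e) :=
        ⟨(e, true), hval, rfl, rfl⟩
      exact (hmemX _).1 hh (hreach.tail hstep)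
    -- no arc of P leaves X
    have hnoexit : ∀ e ∈ P, ¬ (otail ends o e ∈ X ∧ ohead ends o e ∉ X) := by
      rintro e heP ⟨h1', h2'⟩
      have hreach : Relation.ReflTransGen (RStep ends o Pf) s (ohead ends o e) := by
        by_contra hc
        exact h2' ((hmemX _).2 hc)
      have hval : rvalid Pf (e, false) := by
        have hme : e ∈ Pf := by rw [hPf]; exact List.mem_toFinset.2 heP
        simpa [rvalid] using hme
      have hstep : RStep ends o Pf (ohead ends o e) (otail ends o e) :=
        ⟨(e, false), hval, rfl, rfl⟩
      exact (hmemX _).1 h1' (hreach.tail hstep)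
    -- crossing count of P
    have hcross := gwalk_countP_cross hP (fun v => v ∈ X)
    have hexit0 : P.countP (fun e => decide (otail ends o e ∈ X ∧ ¬ ohead ends o e ∈ X)) = 0 := by
      rw [List.countP_eq_zero]
      intro e he
      simpa using hnoexit e he
    rw [hexit0, if_pos htX, if_neg hsX] at hcross
    have henter : P.countP (fun e => decide (¬ otail ends o e ∈ X ∧ ohead ends o e ∈ X)) = 1 := by
      omega
    -- inCut X = 1
    have hcut : inCut ends o X = 1 := by
      unfold inCut
      rw [show (Finset.univ.filter fun e => ohead ends o e ∈ X ∧ otail ends o e ∉ X)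
          = (P.toFinset.filter fun e => ¬ otail ends o e ∈ X ∧ ohead ends o e ∈ X) from ?_]
      · rw [card_toFinset_filter P hPnd]
        exact henter
      · ext e
        simp only [Finset.mem_filter, Finset.mem_univ, true_and, List.mem_toFinset]
        constructor
        · rintro ⟨h1', h2'⟩
          exact ⟨hent e h1' h2', h2', h1'⟩
        · rintro ⟨_, h2', h1'⟩
          exact ⟨h1', h2'⟩
    have := hsep X htX hsX hXuniv
    omega

end MengerSec
section ExchSec
variable {V E : Type*} [Fintype V] [Fintype E] [DecidableEq V] [DecidableEq E]
variable (ends : E → V × V)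

/-- merging overlapping co-tight sets avoiding t into one co-tight set. -/
lemma cotight_merge (o1 : E → Bool) (ho1 : ∀ u v : V, Reach ends o1 u v) (t : V) :
    ∀ (n : ℕ) (C : Finset (Finset V)) (W : Finset V),
    (∀ X ∈ C, (X.Nonempty ∧ X ≠ Finset.univ ∧ outCut ends o1 X = 1) ∧ t ∉ X) →
    (W.Nonempty ∧ W ≠ Finset.univ ∧ outCut ends o1 W = 1) → t ∉ W →
    (Finset.univ : Finset V).card - W.card ≤ n →
    ∃ W', W ⊆ W' ∧ (W'.Nonempty ∧ W' ≠ Finset.univ ∧ outCut ends o1 W' = 1) ∧ t ∉ W' ∧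
      (∀ X ∈ C, X ⊆ W' ∨ Disjoint X W') ∧ W' ⊆ W ∪ C.sup id := by
  intro n
  induction n with
  | zero =>
    intro C W hC hW htW hcard
    exfalso
    have h1 : W.card ≤ (Finset.univ : Finset V).card := Finset.card_le_card (Finset.subset_univ W)
    have h2 : W.card = (Finset.univ : Finset V).card := by omega
    exact hW.2.1 (Finset.eq_univ_of_card W (by rw [h2, Finset.card_univ]))
  | succ n ih =>
    intro C W hC hW htW hcard
    by_cases hall : ∀ X ∈ C, X ⊆ W ∨ Disjoint X W
    · exact ⟨W, Finset.Subset.refl _, hW, htW, hall, Finset.subset_union_left⟩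
    · push_neg at hall
      obtain ⟨X, hXC, hXW, hXdisj⟩ := hall
      have hX := hC X hXC
      -- merge W with X
      have hWX : (W ∪ X).Nonempty ∧ (W ∪ X) ≠ Finset.univ ∧ outCut ends o1 (W ∪ X) = 1 := by
        have hsub := outCut_submod ends o1 W X
        rw [hW.2.2, hX.1.2.2] at hsub
        have hint : (W ∩ X).Nonempty := by
          rw [Finset.not_disjoint_iff] at hXdisj
          obtain ⟨a, ha1, ha2⟩ := hXdisj
          exact ⟨a, Finset.mem_inter.2 ⟨ha2, ha1⟩⟩
        have hint2 : W ∩ X ≠ Finset.univ := fun hc =>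
          hW.2.1 (Finset.univ_subset_iff.1 (hc ▸ Finset.inter_subset_left))
        have huni : W ∪ X ≠ Finset.univ := by
          intro hc
          have : t ∈ W ∪ X := hc ▸ Finset.mem_univ t
          rcases Finset.mem_union.1 this with h | h
          · exact htW h
          · exact hX.2 h
        have h1 := one_le_outCut ends o1 ho1 _ hint hint2
        have h2 := one_le_outCut ends o1 ho1 _ (hW.1.mono Finset.subset_union_left) huni
        exact ⟨hW.1.mono Finset.subset_union_left, huni, by omega⟩
      have htWX : t ∉ W ∪ X := by
        rw [Finset.mem_union]
        rintro (h | h)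
        · exact htW h
        · exact hX.2 h
      have hgrow : W.card < (W ∪ X).card := by
        apply Finset.card_lt_card
        rw [Finset.ssubset_iff_of_subset Finset.subset_union_left]
        obtain ⟨x, hx1, hx2⟩ := Finset.not_subset.1 hXW
        exact ⟨x, Finset.mem_union_right _ hx1, hx2⟩
      obtain ⟨W', h1, h2, h3, h4, h5⟩ := ih C (W ∪ X) hC hWX htWX (by omega)
      refine ⟨W', Finset.subset_union_left.trans h1, h2, h3, h4, ?_⟩
      refine h5.trans ?_
      intro a ha
      rcases Finset.mem_union.1 ha with h | h
      · rcases Finset.mem_union.1 h with h' | h'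
        · exact Finset.mem_union_left _ h'
        · exact Finset.mem_union_right _ (Finset.mem_sup.2 ⟨X, hXC, h'⟩)
      · exact Finset.mem_union_right _ h

/-- union of co-tight sets avoiding `t` has nonnegative `dlt`-sum. -/
lemma cotight_blocks (o1 o2 : E → Bool) (ho1 : ∀ u v : V, Reach ends o1 u v)
    (ho2 : ∀ u v : V, Reach ends o2 u v) (t : V) (C : Finset (Finset V))
    (hC : ∀ X ∈ C, (X.Nonempty ∧ X ≠ Finset.univ ∧ outCut ends o1 X = 1) ∧ t ∉ X) :
    0 ≤ ∑ v ∈ C.sup id, ((indeg ends o1 v : ℤ) - indeg ends o2 v) := by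
  induction C using Finset.strongInduction with
  | _ C ih =>
    rcases Finset.eq_empty_or_nonempty C with rfl | ⟨X₀, hX₀⟩
    · simp
    · have hX := hC X₀ hX₀
      obtain ⟨W', hsub, hW', htW', hsplit, hWsub⟩ :=
        cotight_merge ends o1 ho1 t (Finset.univ : Finset V).card C X₀ hC hX.1 hX.2 (by omega)
      set C' := C.filter (fun X => Disjoint X W') with hC'
      have hCsub : C' ⊂ C := by
        rw [hC']
        refine Finset.filter_ssubset.2 ⟨X₀, hX₀, ?_⟩
        intro hdisj
        obtain ⟨a, ha⟩ := hX.1.1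
        exact (Finset.disjoint_left.1 hdisj) ha (hsub ha)
      have hsup : C.sup id = W' ∪ C'.sup id := by
        apply Finset.Subset.antisymm
        · intro a ha
          obtain ⟨X, hXC, haX⟩ := Finset.mem_sup.1 ha
          rcases hsplit X hXC with h | h
          · exact Finset.mem_union_left _ (h haX)
          · exact Finset.mem_union_right _
              (Finset.mem_sup.2 ⟨X, Finset.mem_filter.2 ⟨hXC, h⟩, haX⟩)
        · refine Finset.union_subset ?_ ?_
          · refine hWsub.trans (Finset.union_subset ?_ (Finset.Subset.refl _))
            intro a ha
            exact Finset.mem_sup.2 ⟨X₀, hX₀, ha⟩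
          · intro a ha
            obtain ⟨X, hXC, haX⟩ := Finset.mem_sup.1 ha
            exact Finset.mem_sup.2 ⟨X, (Finset.mem_filter.1 hXC).1, haX⟩
      have hdisj2 : Disjoint W' (C'.sup id) := by
        rw [Finset.disjoint_sup_right]
        intro X hXC
        exact ((Finset.mem_filter.1 hXC).2).symm
      rw [hsup, Finset.sum_union hdisj2]
      have hW'sum : 0 ≤ ∑ v ∈ W', ((indeg ends o1 v : ℤ) - indeg ends o2 v) := by
        rw [sum_dlt]
        have e1 := dG_split ends o1 W'
        have e2 := dG_split ends o2 W'
        have e3 := one_le_outCut ends o2 ho2 W' hW'.1 hW'.2.1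
        have e4 := hW'.2.2
        omega
      have hC'sum := ih C' hCsub (fun X hXC => hC X (Finset.mem_filter.1 hXC).1)
      omega

/-- **Exchange lemma**: if `t` has larger in-degree in `o1` than in `o2`, there is `s`
with smaller in-degree joined to `t` by two arc-disjoint dipaths of `o1`. -/
lemma exchange (hloop : ∀ e : E, (ends e).1 ≠ (ends e).2)
    (o1 o2 : E → Bool) (ho1 : ∀ u v : V, Reach ends o1 u v)
    (ho2 : ∀ u v : V, Reach ends o2 u v)
    {t : V} (ht : indeg ends o2 t < indeg ends o1 t) :
    ∃ s, indeg ends o1 s < indeg ends o2 s ∧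
      ∃ L₁ L₂ : List E, IsDipath ends o1 s t L₁ ∧ IsDipath ends o1 s t L₂ ∧ L₁.Disjoint L₂ := by
  classical
  have hloop' : ∀ e : E, otail ends o1 e ≠ ohead ends o1 e := by
    intro e
    unfold otail ohead
    by_cases h : o1 e <;> simp [h]
    · exact (hloop e).symm
    · exact hloop e
  set dlt : V → ℤ := fun v => (indeg ends o1 v : ℤ) - indeg ends o2 v with hdlt
  -- pick a minimal tight set containing t, or univ
  obtain ⟨A, htA, hsumA, hkey⟩ :
      ∃ A : Finset V, t ∈ A ∧ (∑ v ∈ A, dlt v) ≤ 0 ∧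
        (∀ Y : Finset V, Y.Nonempty → Y ≠ Finset.univ → inCut ends o1 Y = 1 → t ∈ Y →
          ¬ A ⊆ Y → (Yᶜ ⊆ A.erase t)) := by
    by_cases hT : ∃ B : Finset V, (B.Nonempty ∧ B ≠ Finset.univ ∧ inCut ends o1 B = 1) ∧ t ∈ B
    · set T := Finset.univ.filter
        (fun B : Finset V => (B.Nonempty ∧ B ≠ Finset.univ ∧ inCut ends o1 B = 1) ∧ t ∈ B) with hTdef
      have hTne : T.Nonempty := by
        obtain ⟨B, h1, h2⟩ := hT
        exact ⟨B, Finset.mem_filter.2 ⟨Finset.mem_univ _, h1, h2⟩⟩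
      obtain ⟨A, hAT, hAmin⟩ := T.exists_min_image Finset.card hTne
      have hA := (Finset.mem_filter.1 hAT).2
      refine ⟨A, hA.2, ?_, ?_⟩
      · rw [hdlt, sum_dlt, hA.1.2.2]
        have := one_le_inCut ends o2 ho2 A hA.1.1 hA.1.2.1
        omega
      · intro Y hY1 hY2 hY3 hY4 hY5
        by_cases huni : A ∪ Y = Finset.univ
        · -- complement of Y is inside A, and avoids t
          intro v hv
          rw [Finset.mem_compl] at hv
          rw [Finset.mem_erase]
          constructor
          · rintro rfl; exact hv hY4
          · have : v ∈ A ∪ Y := huni ▸ Finset.mem_univ v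
            rcases Finset.mem_union.1 this with h | h
            · exact h
            · exact absurd h hv
        · -- uncross: A ∩ Y is tight, contradicting minimality
          exfalso
          have hsub := inCut_submod ends o1 A Y
          rw [hA.1.2.2, hY3] at hsub
          have hintne : (A ∩ Y).Nonempty := ⟨t, Finset.mem_inter.2 ⟨hA.2, hY4⟩⟩
          have hintuni : A ∩ Y ≠ Finset.univ := fun hc =>
            hA.1.2.1 (Finset.univ_subset_iff.1 (hc ▸ Finset.inter_subset_left))
          have huninon : (A ∪ Y).Nonempty := hintne.mono
            (Finset.inter_subset_left.trans Finset.subset_union_left)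
          have h1 := one_le_inCut ends o1 ho1 _ hintne hintuni
          have h2 := one_le_inCut ends o1 ho1 _ huninon huni
          have hint_tight : inCut ends o1 (A ∩ Y) = 1 := by omega
          have hmem : A ∩ Y ∈ T := Finset.mem_filter.2
            ⟨Finset.mem_univ _, ⟨hintne, hintuni, hint_tight⟩,
              Finset.mem_inter.2 ⟨hA.2, hY4⟩⟩
          have hcardle := hAmin _ hmem
          have hAY : A ∩ Y = A :=
            Finset.eq_of_subset_of_card_le Finset.inter_subset_left (by omega)
          exact hY5 (fun a ha => (Finset.mem_inter.1 (hAY ▸ ha)).2)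
    · refine ⟨Finset.univ, Finset.mem_univ t, ?_, ?_⟩
      · rw [hdlt, sum_dlt, inCut_univ, inCut_univ]
        simp
      · intro Y hY1 hY2 hY3 hY4 _
        exact absurd ⟨Y, ⟨hY1, hY2, hY3⟩, hY4⟩ hT
  -- the co-tight family below A and its union
  set C := Finset.univ.filter (fun X : Finset V =>
      (X.Nonempty ∧ X ≠ Finset.univ ∧ outCut ends o1 X = 1) ∧ X ⊆ A.erase t) with hCdef
  set U := C.sup id with hU
  have hCall : ∀ X ∈ C, (X.Nonempty ∧ X ≠ Finset.univ ∧ outCut ends o1 X = 1) ∧ t ∉ X := by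
    intro X hX
    have h := (Finset.mem_filter.1 hX).2
    exact ⟨h.1, fun hc => (Finset.mem_erase.1 (h.2 hc)).1 rfl⟩
  have hUsum : 0 ≤ ∑ v ∈ U, dlt v := cotight_blocks ends o1 o2 ho1 ho2 t C hCall
  have hUsubA : U ⊆ A.erase t := by
    intro a ha
    obtain ⟨X, hX, haX⟩ := Finset.mem_sup.1 ha
    exact (Finset.mem_filter.1 hX).2.2 haX
  have htU : t ∉ U := fun hc => (Finset.mem_erase.1 (hUsubA hc)).1 rfl
  have hUsubA' : U ⊆ A := hUsubA.trans (Finset.erase_subset _ _)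
  have hsplit1 : ∑ v ∈ A \ U, dlt v + ∑ v ∈ U, dlt v = ∑ v ∈ A, dlt v :=
    Finset.sum_sdiff hUsubA'
  have htAU : t ∈ A \ U := Finset.mem_sdiff.2 ⟨htA, htU⟩
  have hsplit2 : ∑ v ∈ (A \ U).erase t, dlt v + dlt t = ∑ v ∈ A \ U, dlt v :=
    Finset.sum_erase_add _ _ htAU
  have hdt : (1 : ℤ) ≤ dlt t := by
    simp only [hdlt]
    omega
  have hneg : ∑ v ∈ (A \ U).erase t, dlt v < 0 := by omega
  have hex : ∃ s ∈ (A \ U).erase t, dlt s < 0 := by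
    by_contra hc
    push_neg at hc
    have := Finset.sum_nonneg hc
    omega
  obtain ⟨s, hsmem, hsneg⟩ := hex
  have hs_ne_t : s ≠ t := (Finset.mem_erase.1 hsmem).1
  have hsA : s ∈ A := (Finset.mem_sdiff.1 (Finset.mem_erase.1 hsmem).2).1
  have hsU : s ∉ U := (Finset.mem_sdiff.1 (Finset.mem_erase.1 hsmem).2).2
  have hslt : indeg ends o1 s < indeg ends o2 s := by
    simp only [hdlt] at hsneg
    omega
  refine ⟨s, hslt, ?_⟩
  refine menger2 ends o1 hloop' ho1 hs_ne_t ?_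
  intro X htX hsX hXuniv
  by_contra hlt
  push_neg at hlt
  have hge := one_le_inCut ends o1 ho1 X ⟨t, htX⟩ hXuniv
  have hX1 : inCut ends o1 X = 1 := by omega
  have hnsub : ¬ A ⊆ X := fun hc => hsX (hc hsA)
  have hcomp := hkey X ⟨t, htX⟩ hXuniv hX1 htX hnsub
  have hXc : (Xᶜ : Finset V).Nonempty := ⟨s, Finset.mem_compl.2 hsX⟩
  have hXcuniv : (Xᶜ : Finset V) ≠ Finset.univ := fun hc =>
    (Finset.mem_compl.1 (hc ▸ Finset.mem_univ t)) htX
  have hXccot : outCut ends o1 Xᶜ = 1 := by rw [outCut_compl, compl_compl]; exact hX1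
  have hmemC : Xᶜ ∈ C := Finset.mem_filter.2
    ⟨Finset.mem_univ _, ⟨hXc, hXcuniv, hXccot⟩, hcomp⟩
  exact hsU (Finset.mem_sup.2 ⟨Xᶜ, hmemC, Finset.mem_compl.2 hsX⟩)

end ExchSec

section LexSec

/-- key lemma: count-threshold comparison implies lexicographic comparison of
decreasingly sorted lists. -/
lemma sorted_lex_lt (c : ℕ) : ∀ (L L' : List ℕ),
    L.Pairwise (· ≥ ·) → L'.Pairwise (· ≥ ·) →
    L'.countP (fun x => decide (c ≤ x)) < L.countP (fun x => decide (c ≤ x)) →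
    (∀ k, c < k → L'.countP (fun x => decide (k ≤ x)) = L.countP (fun x => decide (k ≤ x))) →
    List.Lex (· < ·) L' L := by
  intro L
  induction L with
  | nil =>
    intro L' _ _ h1 _
    simp at h1
  | cons x Ltl ih =>
    intro L' hS hS' h1 h2
    cases L' with
    | nil => exact List.Lex.nil
    | cons y L'tl =>
      have hhead : ∀ (M : List ℕ) (z k : ℕ), (z :: M).Pairwise (· ≥ ·) → z < k →
          (z :: M).countP (fun x => decide (k ≤ x)) = 0 := by
        intro M z k hM hzk
        rw [List.countP_eq_zero]
        intro a ha
        simp only [decide_eq_true_eq]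
        rcases List.mem_cons.1 ha with rfl | ha'
        · omega
        · have := List.rel_of_pairwise_cons hM ha'
          omega
      rcases lt_trichotomy y x with hyx | hyx | hyx
      · exact List.Lex.rel hyx
      · subst hyx
        refine List.Lex.cons ?_
        refine ih L'tl hS.of_cons hS'.of_cons ?_ ?_
        · have e1 : (y :: Ltl).countP (fun x => decide (c ≤ x))
              = Ltl.countP (fun x => decide (c ≤ x)) + (if c ≤ y then 1 else 0) := by
            rw [List.countP_cons]
            by_cases h : c ≤ y <;> simp [h]
          have e2 : (y :: L'tl).countP (fun x => decide (c ≤ x))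
              = L'tl.countP (fun x => decide (c ≤ x)) + (if c ≤ y then 1 else 0) := by
            rw [List.countP_cons]
            by_cases h : c ≤ y <;> simp [h]
          omega
        · intro k hk
          have e1 : (y :: Ltl).countP (fun x => decide (k ≤ x))
              = Ltl.countP (fun x => decide (k ≤ x)) + (if k ≤ y then 1 else 0) := by
            rw [List.countP_cons]
            by_cases h : k ≤ y <;> simp [h]
          have e2 : (y :: L'tl).countP (fun x => decide (k ≤ x))
              = L'tl.countP (fun x => decide (k ≤ x)) + (if k ≤ y then 1 else 0) := by
            rw [List.countP_cons]
            by_cases h : k ≤ y <;> simp [h]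
          have := h2 k hk
          omega
      · exfalso
        by_cases hcy : c < y
        · have hzero := hhead Ltl x y hS hyx
          have hpos : 1 ≤ (y :: L'tl).countP (fun x => decide (y ≤ x)) := by
            rw [List.countP_cons]
            simp
          have := h2 y hcy
          omega
        · have hzero := hhead Ltl x c hS (by omega)
          omega

end LexSec

section DecSeqSec
variable {V : Type*} [Fintype V] [DecidableEq V]

lemma decSeq_sorted (m : V → ℕ) : (decSeq m).Pairwise (· ≥ ·) := by
  unfold decSeq
  rw [List.pairwise_reverse]
  exact Multiset.pairwise_sort (Finset.univ.val.map m) (· ≤ ·)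

lemma countP_decSeq (m : V → ℕ) (k : ℕ) :
    (decSeq m).countP (fun x => decide (k ≤ x))
      = (Finset.univ.filter fun v => k ≤ m v).card := by
  unfold decSeq
  rw [List.Perm.countP_eq _ (List.reverse_perm _)]
  rw [← Multiset.coe_countP (fun x => k ≤ x), Multiset.sort_eq, Multiset.countP_map]
  rw [Finset.card_def, Finset.filter_val]

lemma nge_split (m : V → ℕ) {s t : V} (hst : s ≠ t) (k : ℕ) :
    (Finset.univ.filter fun v => k ≤ m v).card
      = (((Finset.univ.erase s).erase t).filter fun v => k ≤ m v).card
        + (if k ≤ m s then 1 else 0) + (if k ≤ m t then 1 else 0) := by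
  rw [Finset.card_filter, Finset.card_filter]
  have h1 := Finset.add_sum_erase Finset.univ
    (fun v => if k ≤ m v then (1:ℕ) else 0) (Finset.mem_univ s)
  have h2 := Finset.add_sum_erase (Finset.univ.erase s)
    (fun v => if k ≤ m v then (1:ℕ) else 0)
    (Finset.mem_erase.2 ⟨hst.symm, Finset.mem_univ t⟩)
  beta_reduce at h1 h2
  omega

lemma decSeq_lt_of_swap {m m2 : V → ℕ} {s t : V} (hst : s ≠ t)
    (hs : m2 s = m s + 1) (ht : m2 t + 1 = m t) (hoth : ∀ v, v ≠ s → v ≠ t → m2 v = m v)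
    (hgap : m s + 2 ≤ m t) : decSeq m2 < decSeq m := by
  show List.Lex (· < ·) (decSeq m2) (decSeq m)
  have key : ∀ k, (Finset.univ.filter fun v => k ≤ m2 v).card
        + (if k ≤ m s then 1 else 0) + (if k ≤ m t then 1 else 0)
      = (Finset.univ.filter fun v => k ≤ m v).card
        + (if k ≤ m2 s then 1 else 0) + (if k ≤ m2 t then 1 else 0) := by
    intro k
    have e1 := nge_split m hst k
    have e2 := nge_split m2 hst k
    have erest : (((Finset.univ.erase s).erase t).filter fun v => k ≤ m2 v).card
        = (((Finset.univ.erase s).erase t).filter fun v => k ≤ m v).card := by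
      congr 1
      apply Finset.filter_congr
      intro v hv
      have hv1 := Finset.mem_erase.1 hv
      have hv2 := Finset.mem_erase.1 hv1.2
      rw [hoth v hv2.1 hv1.1]
    omega
  refine sorted_lex_lt (m t) _ _ (decSeq_sorted m) (decSeq_sorted m2) ?_ ?_
  · rw [countP_decSeq, countP_decSeq]
    have hk := key (m t)
    have c1 : ¬ (m t ≤ m s) := by omega
    have c2 : (m t ≤ m t) := le_refl _
    have c3 : ¬ (m t ≤ m2 s) := by omega
    have c4 : ¬ (m t ≤ m2 t) := by omega
    rw [if_neg c1, if_pos c2, if_neg c3, if_neg c4] at hk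
    omega
  · intro k hk
    rw [countP_decSeq, countP_decSeq]
    have hkk := key k
    have c1 : ¬ (k ≤ m s) := by omega
    have c2 : ¬ (k ≤ m t) := by omega
    have c3 : ¬ (k ≤ m2 s) := by omega
    have c4 : ¬ (k ≤ m2 t) := by omega
    rw [if_neg c1, if_neg c2, if_neg c3, if_neg c4] at hkk
    omega

lemma decSeq_eq_of_swap {m m2 : V → ℕ} {s t : V} (hst : s ≠ t)
    (hs : m2 s = m t) (ht : m2 t = m s) (hoth : ∀ v, v ≠ s → v ≠ t → m2 v = m v) :
    decSeq m2 = decSeq m := by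
  unfold decSeq
  have hmul : Finset.univ.val.map m2 = Finset.univ.val.map m := by
    have h1 : s ∈ Finset.univ.val := Finset.mem_val.mpr (Finset.mem_univ s)
    have hdec : Finset.univ.val = s ::ₘ (Finset.univ.val.erase s) :=
      (Multiset.cons_erase h1).symm
    have h2 : t ∈ Finset.univ.val.erase s :=
      (Multiset.mem_erase_of_ne hst.symm).2 (Finset.mem_val.mpr (Finset.mem_univ t))
    have hdec2 : Finset.univ.val.erase s = t ::ₘ ((Finset.univ.val.erase s).erase t) :=
      (Multiset.cons_erase h2).symm
    have hnd : Finset.univ.val.Nodup := (Finset.univ : Finset V).nodup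
    have hnd1 : (Finset.univ.val.erase s).Nodup := hnd.erase s
    have hmapM : ((Finset.univ.val.erase s).erase t).map m2
        = ((Finset.univ.val.erase s).erase t).map m := by
      apply Multiset.map_congr rfl
      intro x hx
      have hx1 := (Multiset.Nodup.mem_erase_iff hnd1).1 hx
      have hx2 := (Multiset.Nodup.mem_erase_iff hnd).1 hx1.2
      exact hoth x hx2.1 hx1.1
    calc Finset.univ.val.map m2
        = (s ::ₘ t ::ₘ ((Finset.univ.val.erase s).erase t)).map m2 := by rw [← hdec2, ← hdec]
      _ = m2 s ::ₘ m2 t ::ₘ ((Finset.univ.val.erase s).erase t).map m2 := by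
          simp [Multiset.map_cons]
      _ = m t ::ₘ m s ::ₘ ((Finset.univ.val.erase s).erase t).map m := by rw [hs, ht, hmapM]
      _ = m s ::ₘ m t ::ₘ ((Finset.univ.val.erase s).erase t).map m := Multiset.cons_swap _ _ _
      _ = (s ::ₘ t ::ₘ ((Finset.univ.val.erase s).erase t)).map m := by simp [Multiset.map_cons]
      _ = Finset.univ.val.map m := by rw [← hdec2, ← hdec]
  rw [hmul]

end DecSeqSec
/-- A strongly connected orientation `D` of a 2-edge-connected graph `G`
is decreasingly minimal among all strongly connected orientations of `G` iff there are no
nodes `s, t` with `ρ_D(t) ≥ ρ_D(s) + 2` joined by two arc-disjoint `s→t` dipaths in `D`. -/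
theorem decmin_strong_orientation_iff {V E : Type*} [Fintype V] [Fintype E] [DecidableEq V]
    (ends : E → V × V) (hloop : ∀ e, (ends e).1 ≠ (ends e).2)
    (h2ec : ∀ X : Finset V, X.Nonempty → X ≠ Finset.univ → 2 ≤ dG ends X)
    (o : E → Bool) (ho : ∀ u v : V, Reach ends o u v) :
    (∀ o' : E → Bool, (∀ u v : V, Reach ends o' u v) →
        decSeq (indeg ends o) ≤ decSeq (indeg ends o')) ↔
      ¬ ∃ s t : V, indeg ends o s + 2 ≤ indeg ends o t ∧
        ∃ P Q : List E, IsDipath ends o s t P ∧ IsDipath ends o s t Q ∧ P.Disjoint Q := by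
  classical
  constructor
  · -- dec-min implies there is no improving pair
    intro hLHS
    rintro ⟨s, t, hst2, P, Q, hP, hQ, hdisj⟩
    have hst : s ≠ t := by
      intro h
      rw [h] at hst2
      omega
    rw [isDipath_iff_gwalk] at hP hQ
    obtain ⟨P', hP', hP'nd, hP'sub⟩ := gwalk_simple hP
    have hQP' : ∀ e ∈ Q, e ∉ P' := fun e he hc => hdisj (hP'sub e hc) he
    have ho2 : ∀ u v : V, Reach ends (flipF o P'.toFinset) u v :=
      reach_flip ends o hP' hP'nd hQ hQP' ho
    obtain ⟨hfs, hft, hoth⟩ := indeg_flip ends o hP' hP'nd hst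
    have hlt : decSeq (indeg ends (flipF o P'.toFinset)) < decSeq (indeg ends o) :=
      decSeq_lt_of_swap hst hfs (by omega) hoth hst2
    exact absurd (hLHS _ ho2) (not_le_of_gt hlt)
  · -- no improving pair implies dec-min
    intro hRHS o' ho'
    by_contra hnot
    set nu : (E → Bool) → ℕ :=
      fun o2 => ∑ v, ((indeg ends o v : ℤ) - indeg ends o2 v).natAbs with hnu
    have hex : ∃ n : ℕ, ∃ o2 : E → Bool, ((∀ u v : V, Reach ends o2 u v) ∧
        ¬ decSeq (indeg ends o) ≤ decSeq (indeg ends o2)) ∧ nu o2 = n :=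
      ⟨nu o', o', ⟨ho', hnot⟩, rfl⟩
    obtain ⟨o2, ⟨ho2, hnot2⟩, hn2⟩ := Nat.find_spec hex
    have hsum0 : ∑ v, ((indeg ends o v : ℤ) - indeg ends o2 v) = 0 := by
      rw [Finset.sum_sub_distrib, ← Nat.cast_sum, ← Nat.cast_sum,
        sum_indeg_univ, sum_indeg_univ]
      ring
    have hfne : ∃ v, indeg ends o v ≠ indeg ends o2 v := by
      by_contra hc
      push_neg at hc
      have heq : decSeq (indeg ends o) = decSeq (indeg ends o2) := by
        unfold decSeq
        rw [Multiset.map_congr rfl (fun v _ => hc v)]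
      exact hnot2 (le_of_eq heq)
    have ht0 : ∃ t, indeg ends o2 t < indeg ends o t := by
      by_contra hc
      push_neg at hc
      obtain ⟨v, hv⟩ := hfne
      have hvlt : indeg ends o v < indeg ends o2 v := lt_of_le_of_ne (hc v) hv
      have hneg : ∑ v, ((indeg ends o v : ℤ) - indeg ends o2 v) < ∑ _v : V, (0:ℤ) := by
        apply Finset.sum_lt_sum
        · intro i _
          have := hc i
          push_cast
          omega
        · exact ⟨v, Finset.mem_univ v, by push_cast; omega⟩
      rw [Finset.sum_const_zero] at hneg
      omega
    have descent : ∀ n : ℕ, ∀ t : V, indeg ends o2 t < indeg ends o t →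
        Fintype.card E + 1 ≤ indeg ends o2 t + n → False := by
      intro n
      induction n with
      | zero =>
        intro t ht hb
        have := indeg_le_card ends o2 t
        omega
      | succ n ih =>
        intro t ht hb
        obtain ⟨s, hs, L₁, L₂, hL₁, hL₂, hd⟩ := exchange ends hloop o o2 ho ho2 ht
        by_cases hgap : indeg ends o s + 2 ≤ indeg ends o t
        · exact hRHS ⟨s, t, hgap, L₁, L₂, hL₁, hL₂, hd⟩
        · obtain ⟨t₂, ht₂, R₁, R₂, hR₁, hR₂, hd₂⟩ := exchange ends hloop o2 o ho2 ho hs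
          by_cases hflip : indeg ends o2 t₂ + 1 ≤ indeg ends o2 s
          · -- flip a simple version of R₁ in o2
            have ht₂s : t₂ ≠ s := by
              intro h
              rw [h] at ht₂
              omega
            rw [isDipath_iff_gwalk] at hR₁ hR₂
            obtain ⟨R', hR', hR'nd, hR'sub⟩ := gwalk_simple hR₁
            have hQR' : ∀ e ∈ R₂, e ∉ R' := fun e he hc => hd₂ (hR'sub e hc) he
            have ho3 : ∀ u v : V, Reach ends (flipF o2 R'.toFinset) u v :=
              reach_flip ends o2 hR' hR'nd hR₂ hQR' ho2
            set o3 := flipF o2 R'.toFinset with ho3def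
            obtain ⟨hf1, hf2, hf3⟩ := indeg_flip ends o2 hR' hR'nd ht₂s
            rw [← ho3def] at hf1 hf2 hf3
            have hle : decSeq (indeg ends o3) ≤ decSeq (indeg ends o2) := by
              by_cases hgap2 : indeg ends o2 t₂ + 2 ≤ indeg ends o2 s
              · exact le_of_lt (decSeq_lt_of_swap ht₂s hf1 (by omega) hf3 hgap2)
              · refine le_of_eq (decSeq_eq_of_swap ht₂s ?_ ?_ hf3)
                · omega
                · omega
            have hbad3 : ¬ decSeq (indeg ends o) ≤ decSeq (indeg ends o3) :=
              fun hcon => hnot2 (le_trans hcon hle)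
            have hsplitgen : ∀ o4 : E → Bool,
                nu o4 = ((indeg ends o t₂ : ℤ) - indeg ends o4 t₂).natAbs
                  + (((indeg ends o s : ℤ) - indeg ends o4 s).natAbs
                    + ∑ v ∈ (Finset.univ.erase t₂).erase s,
                        ((indeg ends o v : ℤ) - indeg ends o4 v).natAbs) := by
              intro o4
              rw [hnu]
              beta_reduce
              rw [← Finset.add_sum_erase _ _ (Finset.mem_univ t₂),
                ← Finset.add_sum_erase _ _
                  (Finset.mem_erase.2 ⟨Ne.symm ht₂s, Finset.mem_univ s⟩)]
            have hrest : ∑ v ∈ (Finset.univ.erase t₂).erase s,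
                  ((indeg ends o v : ℤ) - indeg ends o3 v).natAbs
                = ∑ v ∈ (Finset.univ.erase t₂).erase s,
                  ((indeg ends o v : ℤ) - indeg ends o2 v).natAbs := by
              refine Finset.sum_congr rfl (fun v hv => ?_)
              have hv1 := Finset.mem_erase.1 hv
              have hv2 := Finset.mem_erase.1 hv1.2
              rw [hf3 v hv2.1 hv1.1]
            have hνlt : nu o3 < nu o2 := by
              rw [hsplitgen o3, hsplitgen o2, hrest]
              have e1 := hf1
              have e2 := hf2
              omega
            have hmin := Nat.find_min hex (show nu o3 < Nat.find hex by omega)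
            exact hmin ⟨o3, ⟨ho3, hbad3⟩, rfl⟩
          · exact ih t₂ ht₂ (by omega)
    obtain ⟨t, ht⟩ := ht0
    exact descent (Fintype.card E + 1) t ht (by omega)
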